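/- arXiv:1206.2535 — 2 statements merged into one kernel-verified Lean document; each statement's English description precedes it below -/
import Mathlib

section
/- Let ψ be the ℂ-algebra homomorphism from the polynomial ring ℂ[z_S, z_T, z₁₂, z₁₃, z₂₁, z₂₃, z₃₁, z₃₂] to the quotient ring R₀/I sending z_S, z_T, z_{ij} respectively to the residue classes of S, T, P_{ij}. Then the kernel of ψ is the principal ideal generated by z_S·z_T − z₁₂·z₂₃·z₃₁ − z₁₃·z₂₁·z₃₂. (This gives the presentation of the algebra R₃(sl₃(ℂ)) of sl₃(ℂ)-invariants in triple tensor products.) -/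
open MvPolynomial

/-- `R₀`: the polynomial ring over `ℂ` in the 18 variables `x_{i,k}` (indexed by
`Sum.inl (i, k)`) and `y_{j,k}` (indexed by `Sum.inr (j, k)`), `i, j, k ∈ {1,2,3}`. -/
abbrev R0 : Type := MvPolynomial ((Fin 3 × Fin 3) ⊕ (Fin 3 × Fin 3)) ℂ

/-- `P_{ij} = Σ_k x_{i,k}·y_{j,k}`. -/
noncomputable def Pgen (i j : Fin 3) : R0 :=
  ∑ k : Fin 3, X (Sum.inl (i, k)) * X (Sum.inr (j, k))

/-- The ideal `I` generated by the diagonal elements `P₁₁, P₂₂, P₃₃`. -/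
noncomputable def Iid : Ideal R0 := Ideal.span {Pgen 0 0, Pgen 1 1, Pgen 2 2}

/-- `S`: the determinant of the `3×3` matrix whose `(k,i)` entry is `x_{i,k}`. -/
noncomputable def Sgen : R0 :=
  (Matrix.of fun k i : Fin 3 => (X (Sum.inl (i, k)) : R0)).det

/-- `T`: the determinant of the `3×3` matrix whose `(k,j)` entry is `y_{j,k}`. -/
noncomputable def Tgen : R0 :=
  (Matrix.of fun k j : Fin 3 => (X (Sum.inr (j, k)) : R0)).det

/-- The images in `R₀/I` of `S, T, P₁₂, P₁₃, P₂₁, P₂₃, P₃₁, P₃₂`, in the variable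
order `z_S, z_T, z₁₂, z₁₃, z₂₁, z₂₃, z₃₁, z₃₂`. -/
noncomputable def presGens : Fin 8 → R0 :=
  ![Sgen, Tgen, Pgen 0 1, Pgen 0 2, Pgen 1 0, Pgen 1 2, Pgen 2 0, Pgen 2 1]

/-- The `ℂ`-algebra map `ψ : ℂ[z_S, z_T, z₁₂, z₁₃, z₂₁, z₂₃, z₃₁, z₃₂] → R₀/I`
sending the variables to the residue classes of `S, T` and the `P_{ij}`. -/
noncomputable def psiPres : MvPolynomial (Fin 8) ℂ →ₐ[ℂ] R0 ⧸ Iid :=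
  MvPolynomial.aeval fun i => Ideal.Quotient.mk Iid (presGens i)

/-! ### Auxiliary material -/


noncomputable def fpoly : MvPolynomial (Fin 8) ℂ :=
  X 0 * X 1 - X 2 * X 5 * X 6 - X 3 * X 4 * X 7

lemma presGens_0 : presGens 0 = Sgen := rfl
lemma presGens_1 : presGens 1 = Tgen := rfl
lemma presGens_2 : presGens 2 = Pgen 0 1 := rfl
lemma presGens_3 : presGens 3 = Pgen 0 2 := rfl
lemma presGens_4 : presGens 4 = Pgen 1 0 := rfl
lemma presGens_5 : presGens 5 = Pgen 1 2 := rfl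
lemma presGens_6 : presGens 6 = Pgen 2 0 := rfl
lemma presGens_7 : presGens 7 = Pgen 2 1 := rfl

lemma key_ident : Sgen * Tgen - Pgen 0 1 * Pgen 1 2 * Pgen 2 0 - Pgen 0 2 * Pgen 1 0 * Pgen 2 1
    = Pgen 0 0 * (Pgen 1 1 * Pgen 2 2 - Pgen 1 2 * Pgen 2 1)
      + Pgen 1 1 * (-(Pgen 0 2 * Pgen 2 0)) + Pgen 2 2 * (-(Pgen 0 1 * Pgen 1 0)) := by
  simp only [Sgen, Tgen, Pgen, Matrix.det_fin_three, Matrix.of_apply, Fin.sum_univ_three]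
  ring

lemma psi_eq (g : MvPolynomial (Fin 8) ℂ) :
    psiPres g = Ideal.Quotient.mk Iid (aeval presGens g) :=
  (comp_aeval_apply (f := presGens) (Ideal.Quotient.mkₐ ℂ Iid) g).symm

lemma mem_ker_iff (g : MvPolynomial (Fin 8) ℂ) :
    g ∈ RingHom.ker psiPres ↔ aeval presGens g ∈ Iid := by
  rw [RingHom.mem_ker]
  show psiPres g = 0 ↔ _
  rw [psi_eq, Ideal.Quotient.eq_zero_iff_mem]

lemma aeval_presGens_fpoly :
    aeval presGens fpoly
      = Sgen * Tgen - Pgen 0 1 * Pgen 1 2 * Pgen 2 0 - Pgen 0 2 * Pgen 1 0 * Pgen 2 1 := by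
  simp only [fpoly, map_sub, map_mul, aeval_X, presGens_0, presGens_1, presGens_2,
    presGens_3, presGens_4, presGens_5, presGens_6, presGens_7]

/-! Irreducibility of `fpoly`. -/

lemma irreducible_linear {R : Type*} [CommRing R] [IsDomain R] {a b : R}
    (ha : Prime a) (hb : ¬ a ∣ b) :
    Irreducible (Polynomial.C a * Polynomial.X + Polynomial.C b) := by
  set p : Polynomial R := Polynomial.C a * Polynomial.X + Polynomial.C b with hp
  have hdeg : p.degree = 1 := Polynomial.degree_linear ha.ne_zero
  have hp0 : p ≠ 0 := fun h => by simp [h] at hdeg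
  have hnd : p.natDegree = 1 := Polynomial.natDegree_eq_of_degree_eq_some hdeg
  have hc1 : p.coeff 1 = a := by simp [hp]
  have hc0 : p.coeff 0 = b := by simp [hp]
  have key : ∀ c : R, Polynomial.C c ∣ p → IsUnit c := by
    intro c hc
    rw [Polynomial.C_dvd_iff_dvd_coeff] at hc
    have h1 : c ∣ a := hc1 ▸ hc 1
    have h0 : c ∣ b := hc0 ▸ hc 0
    obtain ⟨d, hd⟩ := h1
    rcases ha.irreducible.isUnit_or_isUnit hd with h | h
    · exact h
    · exfalso
      apply hb
      obtain ⟨u, rfl⟩ := h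
      obtain ⟨e, he⟩ := h0
      exact ⟨↑u⁻¹ * e, by
        rw [he, hd, mul_assoc, ← mul_assoc (↑u : R), Units.mul_inv, one_mul]⟩
  constructor
  · intro hu
    have := Polynomial.degree_eq_zero_of_isUnit hu
    rw [hdeg] at this; exact one_ne_zero this
  · intro u v huv
    have hu0 : u ≠ 0 := fun h => hp0 (by simp [huv, h])
    have hv0 : v ≠ 0 := fun h => hp0 (by simp [huv, h])
    have : u.natDegree + v.natDegree = 1 := by
      rw [← Polynomial.natDegree_mul hu0 hv0, ← huv, hnd]
    rcases Nat.add_eq_one_iff.mp this with ⟨h1, _⟩ | ⟨_, h1⟩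
    · left
      rw [Polynomial.eq_C_of_natDegree_eq_zero h1]
      exact Polynomial.isUnit_C.mpr (key _
        (by rw [← Polynomial.eq_C_of_natDegree_eq_zero h1, huv]; exact Dvd.intro _ rfl))
    · right
      rw [Polynomial.eq_C_of_natDegree_eq_zero h1]
      exact Polynomial.isUnit_C.mpr (key _
        (by rw [← Polynomial.eq_C_of_natDegree_eq_zero h1, huv]; exact Dvd.intro_left _ rfl))

lemma fpoly_image : (finSuccEquiv ℂ 7) fpoly =
    Polynomial.C (X 0) * Polynomial.X +
      Polynomial.C (-(X 1 * X 4 * X 5 + X 2 * X 3 * X 6) : MvPolynomial (Fin 7) ℂ) := by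
  have h1 : (1 : Fin 8) = Fin.succ 0 := rfl
  have h2 : (2 : Fin 8) = Fin.succ 1 := rfl
  have h3 : (3 : Fin 8) = Fin.succ 2 := rfl
  have h4 : (4 : Fin 8) = Fin.succ 3 := rfl
  have h5 : (5 : Fin 8) = Fin.succ 4 := rfl
  have h6 : (6 : Fin 8) = Fin.succ 5 := rfl
  have h7 : (7 : Fin 8) = Fin.succ 6 := rfl
  simp only [fpoly, map_sub, map_mul, h1, h2, h3, h4, h5, h6, h7,
    finSuccEquiv_X_zero, finSuccEquiv_X_succ, map_neg, map_add]
  ring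

lemma not_dvd_aux : ¬ (X 0 : MvPolynomial (Fin 7) ℂ) ∣ -(X 1 * X 4 * X 5 + X 2 * X 3 * X 6) := by
  rintro ⟨q, hq⟩
  have := congrArg (eval fun i : Fin 7 => if i = 0 then 0 else 1) hq
  simp at this

lemma primeX0 : Prime (X 0 : MvPolynomial (Fin 7) ℂ) := by
  have h : Prime ((finSuccEquiv ℂ 6) (X 0)) := by
    rw [finSuccEquiv_X_zero]; exact Polynomial.prime_X
  exact (MulEquiv.prime_iff (finSuccEquiv ℂ 6).toMulEquiv).mp h

lemma fpoly_prime : Prime fpoly := by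
  rw [← UniqueFactorizationMonoid.irreducible_iff_prime,
    ← MulEquiv.irreducible_iff (finSuccEquiv ℂ 7).toMulEquiv]
  show Irreducible ((finSuccEquiv ℂ 7) fpoly)
  rw [fpoly_image]
  exact irreducible_linear primeX0 not_dvd_aux

/-! The point construction. -/

noncomputable def pt (z : Fin 8 → ℂ) : (Fin 3 × Fin 3) ⊕ (Fin 3 × Fin 3) → ℂ :=
  Sum.elim (fun p => ![![z 0, 0, 0], ![0, 1, 0], ![0, 0, 1]] p.1 p.2)
    (fun p => ![![0, z 4, z 6], ![z 2 / z 0, 0, z 7], ![z 3 / z 0, z 5, 0]] p.1 p.2)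

section Pt
variable (z : Fin 8 → ℂ)

lemma pt_diag (i : Fin 3) : eval (pt z) (Pgen i i) = 0 := by
  fin_cases i <;>
    simp [Pgen, Fin.sum_univ_three, pt, Matrix.cons_val_zero, Matrix.cons_val_one,
      Matrix.head_cons, Matrix.cons_val_two, Matrix.vecHead, Matrix.vecTail]

lemma pt_S : eval (pt z) Sgen = z 0 := by
  simp [Sgen, Matrix.det_fin_three, pt]

lemma pt_T (hz0 : z 0 ≠ 0) (hz : z 0 * z 1 - z 2 * z 5 * z 6 - z 3 * z 4 * z 7 = 0) :
    eval (pt z) Tgen = z 1 := by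
  simp [Tgen, Matrix.det_fin_three, pt, Matrix.cons_val_zero, Matrix.cons_val_one,
    Matrix.head_cons, Matrix.cons_val_two, Matrix.vecHead, Matrix.vecTail]
  field_simp
  linear_combination -hz

lemma pt_P01 (hz0 : z 0 ≠ 0) : eval (pt z) (Pgen 0 1) = z 2 := by
  simp [Pgen, Fin.sum_univ_three, pt, Matrix.cons_val_zero, Matrix.cons_val_one,
    Matrix.head_cons, Matrix.cons_val_two, Matrix.vecHead, Matrix.vecTail]
  field_simp

lemma pt_P02 (hz0 : z 0 ≠ 0) : eval (pt z) (Pgen 0 2) = z 3 := by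
  simp [Pgen, Fin.sum_univ_three, pt, Matrix.cons_val_zero, Matrix.cons_val_one,
    Matrix.head_cons, Matrix.cons_val_two, Matrix.vecHead, Matrix.vecTail]
  field_simp

lemma pt_P10 : eval (pt z) (Pgen 1 0) = z 4 := by
  simp [Pgen, Fin.sum_univ_three, pt, Matrix.cons_val_zero, Matrix.cons_val_one,
    Matrix.head_cons, Matrix.cons_val_two, Matrix.vecHead, Matrix.vecTail]

lemma pt_P12 : eval (pt z) (Pgen 1 2) = z 5 := by
  simp [Pgen, Fin.sum_univ_three, pt, Matrix.cons_val_zero, Matrix.cons_val_one,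
    Matrix.head_cons, Matrix.cons_val_two, Matrix.vecHead, Matrix.vecTail]

lemma pt_P20 : eval (pt z) (Pgen 2 0) = z 6 := by
  simp [Pgen, Fin.sum_univ_three, pt, Matrix.cons_val_zero, Matrix.cons_val_one,
    Matrix.head_cons, Matrix.cons_val_two, Matrix.vecHead, Matrix.vecTail]

lemma pt_P21 : eval (pt z) (Pgen 2 1) = z 7 := by
  simp [Pgen, Fin.sum_univ_three, pt, Matrix.cons_val_zero, Matrix.cons_val_one,
    Matrix.head_cons, Matrix.cons_val_two, Matrix.vecHead, Matrix.vecTail]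

lemma pt_presGens (hz0 : z 0 ≠ 0)
    (hz : z 0 * z 1 - z 2 * z 5 * z 6 - z 3 * z 4 * z 7 = 0) (i : Fin 8) :
    eval (pt z) (presGens i) = z i := by
  fin_cases i
  · exact pt_S z
  · exact pt_T z hz0 hz
  · exact pt_P01 z hz0
  · exact pt_P02 z hz0
  · exact pt_P10 z
  · exact pt_P12 z
  · exact pt_P20 z
  · exact pt_P21 z

end Pt


/-- Presentation of `R₃(sl₃(ℂ))`: the kernel of `ψ` is the principal ideal generated
by `z_S·z_T − z₁₂·z₂₃·z₃₁ − z₁₃·z₂₁·z₃₂`. -/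
theorem stmt_17 :
    RingHom.ker psiPres =
      Ideal.span {(X 0 * X 1 - X 2 * X 5 * X 6 - X 3 * X 4 * X 7 :
        MvPolynomial (Fin 8) ℂ)} := by
  have hspan : (Ideal.span {(X 0 * X 1 - X 2 * X 5 * X 6 - X 3 * X 4 * X 7 :
      MvPolynomial (Fin 8) ℂ)}) = Ideal.span {fpoly} := rfl
  rw [hspan]
  apply le_antisymm
  · -- ker ⊆ (fpoly)
    intro g hg
    rw [mem_ker_iff] at hg
    have hvan : X 0 * g ∈ vanishingIdeal ℂ (zeroLocus ℂ (Ideal.span {fpoly})) := by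
      rw [mem_vanishingIdeal_iff]
      intro z hz
      show eval z (X 0 * g) = 0
      have hzf : eval z fpoly = 0 :=
        (mem_zeroLocus_iff.mp hz) fpoly (Ideal.subset_span rfl)
      have hzf' : z 0 * z 1 - z 2 * z 5 * z 6 - z 3 * z 4 * z 7 = 0 := by
        simpa [fpoly] using hzf
      rw [map_mul, eval_X]
      by_cases hz0 : z 0 = 0
      · rw [hz0, zero_mul]
      · have hg0 : eval z g = 0 := by
          have hker : eval (pt z) (aeval presGens g) = 0 := by
            have hle : Iid ≤ RingHom.ker (eval (pt z)) := by
              rw [Iid, Ideal.span_le]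
              rintro q hq
              simp only [Set.mem_insert_iff, Set.mem_singleton_iff] at hq
              rcases hq with rfl | rfl | rfl <;>
                simpa [RingHom.mem_ker] using pt_diag z _
            exact hle hg
          have h2 : eval (pt z) (aeval presGens g) = eval z g := by
            have h3 : eval (pt z) (aeval presGens g)
                = aeval (fun i => eval (pt z) (presGens i)) g :=
              comp_aeval_apply (f := presGens) (aeval (pt z)) g
            have h4 : (fun i => eval (pt z) (presGens i)) = z :=
              funext (pt_presGens z hz0 hzf')
            rw [h3, h4]
            rfl
          rw [← h2, hker]
        rw [hg0, mul_zero]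
    rw [vanishingIdeal_zeroLocus_eq_radical] at hvan
    have hpr : (Ideal.span {fpoly}).IsPrime :=
      (Ideal.span_singleton_prime fpoly_prime.ne_zero).mpr fpoly_prime
    rw [hpr.radical, Ideal.mem_span_singleton] at hvan
    have hnd : ¬ fpoly ∣ X 0 := by
      rintro ⟨q, hq⟩
      have := congrArg (eval fun i : Fin 8 => if i = 0 then 1 else 0) hq
      simp [fpoly] at this
    rw [Ideal.mem_span_singleton]
    exact (fpoly_prime.dvd_or_dvd hvan).resolve_left hnd
  · -- (fpoly) ⊆ ker
    rw [Ideal.span_le, Set.singleton_subset_iff]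
    show fpoly ∈ RingHom.ker psiPres
    rw [mem_ker_iff, aeval_presGens_fpoly, key_ident]
    refine Ideal.add_mem _ (Ideal.add_mem _ ?_ ?_) ?_ <;>
      exact Ideal.mul_mem_right _ _ (Ideal.subset_span (by simp))
end

section
/- Let V be a nonempty finite set and let P be any set of unordered pairs of distinct half-edges (a half-edge is a pair (v,i) with v ∈ V, i ∈ {1,2,3}; the two half-edges in a pair may belong to the same vertex) such that each half-edge belongs to at most one pair of P. Let C_P ⊆ (V → ℝ¹⁰) be the convex cone of all functions f : V → ℝ¹⁰, f(v) = (x_v, L_v), such that f(v) ∈ C for every v, all level coordinates L_v are equal, and ∂ᵢ(x_v) = σ(∂ⱼ(x_w)) for every pair {(v,i),(w,j)} ∈ P, where ∂ is extended ℝ-linearly and σ(p,q) = (q,p). Let ω_P : V → ℤ¹⁰ be the function with ω_P(v) = (1,1,1,1,1,1,1,1,1,6) for all v. Then relint(C_P) ∩ (V → ℤ¹⁰) = {ω_P + u : u ∈ C_P ∩ (V → ℤ¹⁰)}, where relint denotes the intrinsic (relative) interior. (This is the combinatorial Gorenstein property, with canonical generator in level 6, of the glued conformal-block cone of any trivalent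 graph.) -/
/-- The nine generators `g_X, g_S, g_T, g₁₂, g₂₃, g₃₁, g₂₁, g₃₂, g₁₃` of the
trinode cone in `ℤ¹⁰ = ℤ⁹ × ℤ` (first nine coordinates ordered
`(a₁,b₁,c₁,a₂,a₃,b₂,b₃,c₂,c₃)`, last coordinate the level). -/
def cbGens : Fin 9 → Fin 10 → ℤ :=
  ![![0, 0, 0, 0, 0, 0, 0, 0, 0, 1],  -- g_X
    ![0, 0, 0, 1, 0, 1, 0, 1, 0, 1],  -- g_S
    ![0, 0, 0, 0, 1, 0, 1, 0, 1, 1],  -- g_T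
    ![0, 0, 0, 1, 0, 0, 1, 0, 0, 1],  -- g₁₂
    ![0, 0, 0, 0, 0, 1, 0, 0, 1, 1],  -- g₂₃
    ![0, 0, 0, 0, 1, 0, 0, 1, 0, 1],  -- g₃₁
    ![0, 1, 0, 0, 0, 0, 0, 0, 0, 1],  -- g₂₁
    ![0, 0, 1, 0, 0, 0, 0, 0, 0, 1],  -- g₃₂
    ![1, 0, 0, 0, 0, 0, 0, 0, 0, 1]]  -- g₁₃

/-- The real versions of the nine generators. -/
noncomputable def cbGensR (i : Fin 9) : Fin 10 → ℝ := fun t => (cbGens i t : ℝ)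

/-- The polyhedral cone `C ⊆ ℝ¹⁰` generated by the nine vectors. -/
def coneC : Set (Fin 10 → ℝ) :=
  {y | ∃ c : Fin 9 → ℝ, (∀ i, 0 ≤ c i) ∧ y = ∑ i : Fin 9, c i • cbGensR i}

/-- The (ℝ-linearly extended) boundary map applied to the `ℝ⁹`-part of a point of
`ℝ¹⁰`: `∂(x) = ((a₁+a₂, a₃+b₁), (b₁+b₂, b₃+c₁), (c₁+c₂, c₃+a₁))`. -/
def bd10R (y : Fin 10 → ℝ) : Fin 3 → ℝ × ℝ :=
  ![(y 0 + y 3, y 4 + y 1), (y 1 + y 5, y 6 + y 2), (y 2 + y 7, y 8 + y 0)]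

/-- The swap `σ(p, q) = (q, p)`. -/
def swR (p : ℝ × ℝ) : ℝ × ℝ := (p.2, p.1)

/-- The glued cone `C_P ⊆ (V → ℝ¹⁰)` of a trivalent graph: functions `f` with
`f v ∈ C` for all `v`, all level coordinates equal, and matching dually along every
pair of half-edges in `P`. -/
def gluedCone (V : Type) (P : Set (Sym2 (V × Fin 3))) : Set (V → Fin 10 → ℝ) :=
  {f | (∀ v, f v ∈ coneC) ∧ (∀ v w, f v 9 = f w 9) ∧
    ∀ (v w : V) (i j : Fin 3),
      s((v, i), (w, j)) ∈ P → bd10R (f v) i = swR (bd10R (f w) j)}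

/-- `ω_P : V → ℤ¹⁰`, with all nine triangle entries `1` and level `6` at each vertex. -/
def omegaP (V : Type) : V → Fin 10 → ℤ := fun _ => ![1, 1, 1, 1, 1, 1, 1, 1, 1, 6]

namespace CBaux

lemma sum9 {f : Fin 9 → ℝ} : ∑ i, f i = f 0 + f 1 + f 2 + f 3 + f 4 + f 5 + f 6 + f 7 + f 8 := by
  show Finset.univ.sum f = _
  rw [show (Finset.univ : Finset (Fin 9)) = {0,1,2,3,4,5,6,7,8} by rfl]
  rw [Finset.sum_insert (by decide), Finset.sum_insert (by decide), Finset.sum_insert (by decide),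
     Finset.sum_insert (by decide), Finset.sum_insert (by decide), Finset.sum_insert (by decide),
     Finset.sum_insert (by decide), Finset.sum_insert (by decide), Finset.sum_singleton]
  ring

lemma sumcoord (c : Fin 9 → ℝ) (t : Fin 10) :
    (∑ i : Fin 9, c i • cbGensR i) t = ∑ i : Fin 9, c i * ((cbGens i t : ℤ) : ℝ) := by
  simp [Finset.sum_apply, cbGensR]

lemma sumc_0 (c : Fin 9 → ℝ) : (∑ i : Fin 9, c i • cbGensR i) 0 = c 8 := by
  rw [sumcoord, sum9]; norm_num [show cbGens 0 0 = 0 from rfl, show cbGens 1 0 = 0 from rfl, show cbGens 2 0 = 0 from rfl, show cbGens 3 0 = 0 from rfl, show cbGens 4 0 = 0 from rfl, show cbGens 5 0 = 0 from rfl, show cbGens 6 0 = 0 from rfl, show cbGens 7 0 = 0 from rfl, show cbGens 8 0 = 1 from rfl]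
lemma sumc_1 (c : Fin 9 → ℝ) : (∑ i : Fin 9, c i • cbGensR i) 1 = c 6 := by
  rw [sumcoord, sum9]; norm_num [show cbGens 0 1 = 0 from rfl, show cbGens 1 1 = 0 from rfl, show cbGens 2 1 = 0 from rfl, show cbGens 3 1 = 0 from rfl, show cbGens 4 1 = 0 from rfl, show cbGens 5 1 = 0 from rfl, show cbGens 6 1 = 1 from rfl, show cbGens 7 1 = 0 from rfl, show cbGens 8 1 = 0 from rfl]
lemma sumc_2 (c : Fin 9 → ℝ) : (∑ i : Fin 9, c i • cbGensR i) 2 = c 7 := by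
  rw [sumcoord, sum9]; norm_num [show cbGens 0 2 = 0 from rfl, show cbGens 1 2 = 0 from rfl, show cbGens 2 2 = 0 from rfl, show cbGens 3 2 = 0 from rfl, show cbGens 4 2 = 0 from rfl, show cbGens 5 2 = 0 from rfl, show cbGens 6 2 = 0 from rfl, show cbGens 7 2 = 1 from rfl, show cbGens 8 2 = 0 from rfl]
lemma sumc_3 (c : Fin 9 → ℝ) : (∑ i : Fin 9, c i • cbGensR i) 3 = c 1 + c 3 := by
  rw [sumcoord, sum9]; norm_num [show cbGens 0 3 = 0 from rfl, show cbGens 1 3 = 1 from rfl, show cbGens 2 3 = 0 from rfl, show cbGens 3 3 = 1 from rfl, show cbGens 4 3 = 0 from rfl, show cbGens 5 3 = 0 from rfl, show cbGens 6 3 = 0 from rfl, show cbGens 7 3 = 0 from rfl, show cbGens 8 3 = 0 from rfl]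
lemma sumc_4 (c : Fin 9 → ℝ) : (∑ i : Fin 9, c i • cbGensR i) 4 = c 2 + c 5 := by
  rw [sumcoord, sum9]; norm_num [show cbGens 0 4 = 0 from rfl, show cbGens 1 4 = 0 from rfl, show cbGens 2 4 = 1 from rfl, show cbGens 3 4 = 0 from rfl, show cbGens 4 4 = 0 from rfl, show cbGens 5 4 = 1 from rfl, show cbGens 6 4 = 0 from rfl, show cbGens 7 4 = 0 from rfl, show cbGens 8 4 = 0 from rfl]
lemma sumc_5 (c : Fin 9 → ℝ) : (∑ i : Fin 9, c i • cbGensR i) 5 = c 1 + c 4 := by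
  rw [sumcoord, sum9]; norm_num [show cbGens 0 5 = 0 from rfl, show cbGens 1 5 = 1 from rfl, show cbGens 2 5 = 0 from rfl, show cbGens 3 5 = 0 from rfl, show cbGens 4 5 = 1 from rfl, show cbGens 5 5 = 0 from rfl, show cbGens 6 5 = 0 from rfl, show cbGens 7 5 = 0 from rfl, show cbGens 8 5 = 0 from rfl]
lemma sumc_6 (c : Fin 9 → ℝ) : (∑ i : Fin 9, c i • cbGensR i) 6 = c 2 + c 3 := by
  rw [sumcoord, sum9]; norm_num [show cbGens 0 6 = 0 from rfl, show cbGens 1 6 = 0 from rfl, show cbGens 2 6 = 1 from rfl, show cbGens 3 6 = 1 from rfl, show cbGens 4 6 = 0 from rfl, show cbGens 5 6 = 0 from rfl, show cbGens 6 6 = 0 from rfl, show cbGens 7 6 = 0 from rfl, show cbGens 8 6 = 0 from rfl]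
lemma sumc_7 (c : Fin 9 → ℝ) : (∑ i : Fin 9, c i • cbGensR i) 7 = c 1 + c 5 := by
  rw [sumcoord, sum9]; norm_num [show cbGens 0 7 = 0 from rfl, show cbGens 1 7 = 1 from rfl, show cbGens 2 7 = 0 from rfl, show cbGens 3 7 = 0 from rfl, show cbGens 4 7 = 0 from rfl, show cbGens 5 7 = 1 from rfl, show cbGens 6 7 = 0 from rfl, show cbGens 7 7 = 0 from rfl, show cbGens 8 7 = 0 from rfl]
lemma sumc_8 (c : Fin 9 → ℝ) : (∑ i : Fin 9, c i • cbGensR i) 8 = c 2 + c 4 := by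
  rw [sumcoord, sum9]; norm_num [show cbGens 0 8 = 0 from rfl, show cbGens 1 8 = 0 from rfl, show cbGens 2 8 = 1 from rfl, show cbGens 3 8 = 0 from rfl, show cbGens 4 8 = 1 from rfl, show cbGens 5 8 = 0 from rfl, show cbGens 6 8 = 0 from rfl, show cbGens 7 8 = 0 from rfl, show cbGens 8 8 = 0 from rfl]
lemma sumc_9 (c : Fin 9 → ℝ) : (∑ i : Fin 9, c i • cbGensR i) 9 = c 0 + c 1 + c 2 + c 3 + c 4 + c 5 + c 6 + c 7 + c 8 := by
  rw [sumcoord, sum9]; norm_num [show cbGens 0 9 = 1 from rfl, show cbGens 1 9 = 1 from rfl, show cbGens 2 9 = 1 from rfl, show cbGens 3 9 = 1 from rfl, show cbGens 4 9 = 1 from rfl, show cbGens 5 9 = 1 from rfl, show cbGens 6 9 = 1 from rfl, show cbGens 7 9 = 1 from rfl, show cbGens 8 9 = 1 from rfl]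

def lfun : Fin 12 → (Fin 10 → ℝ) → ℝ :=
  ![fun y => y 0, fun y => y 1, fun y => y 2,
    fun y => -y 0 - y 1 - y 2 - y 3 + 3*y 4 + 4*y 5 - 4*y 7 - 4*y 8 + y 9,
    fun y => -y 0 - y 1 - y 2 + 4*y 4 + 3*y 5 - y 6 - 4*y 7 - 4*y 8 + y 9,
    fun y => -y 0 - y 1 - y 2 + 3*y 4 + 3*y 5 - 4*y 7 - 4*y 8 + y 9,
    fun y => y 4 + y 5 - y 7,
    fun y => 2*y 4 + y 5 - y 7 - y 8,
    fun y => y 4 + 2*y 5 - y 7 - y 8,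
    fun y => y 4 + y 5 - y 8,
    fun y => y 4 + y 5 + y 6 - y 7 - y 8,
    fun y => y 3 + y 4 + y 5 - y 7 - y 8]

lemma mem_coneC_iff (y : Fin 10 → ℝ) :
    y ∈ coneC ↔ (y 3 + y 4 = y 6 + y 7 ∧ y 3 + y 8 = y 5 + y 6 ∧ ∀ k, 0 ≤ lfun k y) := by
  constructor
  · rintro ⟨c, hc, hy⟩
    have h0 : y 0 = c 8 := by rw [hy, sumc_0]
    have h1 : y 1 = c 6 := by rw [hy, sumc_1]
    have h2 : y 2 = c 7 := by rw [hy, sumc_2]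
    have h3 : y 3 = c 1 + c 3 := by rw [hy, sumc_3]
    have h4 : y 4 = c 2 + c 5 := by rw [hy, sumc_4]
    have h5 : y 5 = c 1 + c 4 := by rw [hy, sumc_5]
    have h6 : y 6 = c 2 + c 3 := by rw [hy, sumc_6]
    have h7 : y 7 = c 1 + c 5 := by rw [hy, sumc_7]
    have h8 : y 8 = c 2 + c 4 := by rw [hy, sumc_8]
    have h9 : y 9 = c 0 + c 1 + c 2 + c 3 + c 4 + c 5 + c 6 + c 7 + c 8 := by rw [hy, sumc_9]
    have hc0 := hc 0; have hc1 := hc 1; have hc2 := hc 2; have hc3 := hc 3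
    have hc4 := hc 4; have hc5 := hc 5; have hc6 := hc 6; have hc7 := hc 7; have hc8 := hc 8
    refine ⟨by linarith, by linarith, ?_⟩
    intro k; fin_cases k
    · exact (show (0:ℝ) ≤ y 0 by linarith)
    · exact (show (0:ℝ) ≤ y 1 by linarith)
    · exact (show (0:ℝ) ≤ y 2 by linarith)
    · exact (show (0:ℝ) ≤ -y 0 - y 1 - y 2 - y 3 + 3*y 4 + 4*y 5 - 4*y 7 - 4*y 8 + y 9 by linarith)
    · exact (show (0:ℝ) ≤ -y 0 - y 1 - y 2 + 4*y 4 + 3*y 5 - y 6 - 4*y 7 - 4*y 8 + y 9 by linarith)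
    · exact (show (0:ℝ) ≤ -y 0 - y 1 - y 2 + 3*y 4 + 3*y 5 - 4*y 7 - 4*y 8 + y 9 by linarith)
    · exact (show (0:ℝ) ≤ y 4 + y 5 - y 7 by linarith)
    · exact (show (0:ℝ) ≤ 2*y 4 + y 5 - y 7 - y 8 by linarith)
    · exact (show (0:ℝ) ≤ y 4 + 2*y 5 - y 7 - y 8 by linarith)
    · exact (show (0:ℝ) ≤ y 4 + y 5 - y 8 by linarith)
    · exact (show (0:ℝ) ≤ y 4 + y 5 + y 6 - y 7 - y 8 by linarith)
    · exact (show (0:ℝ) ≤ y 3 + y 4 + y 5 - y 7 - y 8 by linarith)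
  · rintro ⟨hE1, hE2, hk⟩
    have H0 : (0:ℝ) ≤ y 0 := hk 0
    have H1 : (0:ℝ) ≤ y 1 := hk 1
    have H2 : (0:ℝ) ≤ y 2 := hk 2
    have H3 : (0:ℝ) ≤ -y 0 - y 1 - y 2 - y 3 + 3*y 4 + 4*y 5 - 4*y 7 - 4*y 8 + y 9 := hk 3
    have H4 : (0:ℝ) ≤ -y 0 - y 1 - y 2 + 4*y 4 + 3*y 5 - y 6 - 4*y 7 - 4*y 8 + y 9 := hk 4
    have H5 : (0:ℝ) ≤ -y 0 - y 1 - y 2 + 3*y 4 + 3*y 5 - 4*y 7 - 4*y 8 + y 9 := hk 5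
    have H6 : (0:ℝ) ≤ y 4 + y 5 - y 7 := hk 6
    have H7 : (0:ℝ) ≤ 2*y 4 + y 5 - y 7 - y 8 := hk 7
    have H8 : (0:ℝ) ≤ y 4 + 2*y 5 - y 7 - y 8 := hk 8
    have H9 : (0:ℝ) ≤ y 4 + y 5 - y 8 := hk 9
    have H10 : (0:ℝ) ≤ y 4 + y 5 + y 6 - y 7 - y 8 := hk 10
    have H11 : (0:ℝ) ≤ y 3 + y 4 + y 5 - y 7 - y 8 := hk 11
    set s : ℝ := max 0 (max (y 3 - y 6) (y 0 + y 1 + y 2 + y 5 + y 6 + y 7 - y 9)) with hs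
    have hs0 : (0:ℝ) ≤ s := le_max_left _ _
    have hsA : y 3 - y 6 ≤ s := le_trans (le_max_left _ _) (le_max_right _ _)
    have hsB : y 0 + y 1 + y 2 + y 5 + y 6 + y 7 - y 9 ≤ s := le_trans (le_max_right _ _) (le_max_right _ _)
    have hs3 : s ≤ y 3 := max_le (by linarith) (max_le (by linarith) (by linarith))
    have hs5 : s ≤ y 5 := max_le (by linarith) (max_le (by linarith) (by linarith))
    have hs7 : s ≤ y 7 := max_le (by linarith) (max_le (by linarith) (by linarith))
    refine ⟨![y 9 - y 0 - y 1 - y 2 - y 5 - y 6 - y 7 + s, s, s + y 6 - y 3,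
      y 3 - s, y 5 - s, y 7 - s, y 1, y 2, y 0], ?_, ?_⟩
    · intro i; fin_cases i
      · exact (show (0:ℝ) ≤ y 9 - y 0 - y 1 - y 2 - y 5 - y 6 - y 7 + s by linarith)
      · exact (show (0:ℝ) ≤ s by linarith)
      · exact (show (0:ℝ) ≤ s + y 6 - y 3 by linarith)
      · exact (show (0:ℝ) ≤ y 3 - s by linarith)
      · exact (show (0:ℝ) ≤ y 5 - s by linarith)
      · exact (show (0:ℝ) ≤ y 7 - s by linarith)
      · exact (show (0:ℝ) ≤ y 1 by linarith)
      · exact (show (0:ℝ) ≤ y 2 by linarith)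
      · exact (show (0:ℝ) ≤ y 0 by linarith)
    · set c : Fin 9 → ℝ := ![y 9 - y 0 - y 1 - y 2 - y 5 - y 6 - y 7 + s, s, s + y 6 - y 3,
        y 3 - s, y 5 - s, y 7 - s, y 1, y 2, y 0] with hcdef
      have hv0 : c 0 = y 9 - y 0 - y 1 - y 2 - y 5 - y 6 - y 7 + s := rfl
      have hv1 : c 1 = s := rfl
      have hv2 : c 2 = s + y 6 - y 3 := rfl
      have hv3 : c 3 = y 3 - s := rfl
      have hv4 : c 4 = y 5 - s := rfl
      have hv5 : c 5 = y 7 - s := rfl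
      have hv6 : c 6 = y 1 := rfl
      have hv7 : c 7 = y 2 := rfl
      have hv8 : c 8 = y 0 := rfl
      funext t; fin_cases t
      · exact (show y 0 = (∑ i : Fin 9, c i • cbGensR i) 0 by rw [sumc_0]; linarith)
      · exact (show y 1 = (∑ i : Fin 9, c i • cbGensR i) 1 by rw [sumc_1]; linarith)
      · exact (show y 2 = (∑ i : Fin 9, c i • cbGensR i) 2 by rw [sumc_2]; linarith)
      · exact (show y 3 = (∑ i : Fin 9, c i • cbGensR i) 3 by rw [sumc_3]; linarith)
      · exact (show y 4 = (∑ i : Fin 9, c i • cbGensR i) 4 by rw [sumc_4]; linarith)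
      · exact (show y 5 = (∑ i : Fin 9, c i • cbGensR i) 5 by rw [sumc_5]; linarith)
      · exact (show y 6 = (∑ i : Fin 9, c i • cbGensR i) 6 by rw [sumc_6]; linarith)
      · exact (show y 7 = (∑ i : Fin 9, c i • cbGensR i) 7 by rw [sumc_7]; linarith)
      · exact (show y 8 = (∑ i : Fin 9, c i • cbGensR i) 8 by rw [sumc_8]; linarith)
      · exact (show y 9 = (∑ i : Fin 9, c i • cbGensR i) 9 by rw [sumc_9]; linarith)

def wR : Fin 10 → ℝ := ![1,1,1,1,1,1,1,1,1,6]

lemma lfun_w : ∀ k, lfun k wR = 1 := by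
  intro k; fin_cases k
  · exact (show (1:ℝ) = 1 by norm_num)
  · exact (show (1:ℝ) = 1 by norm_num)
  · exact (show (1:ℝ) = 1 by norm_num)
  · exact (show -(1:ℝ) - 1 - 1 - 1 + 3*1 + 4*1 - 4*1 - 4*1 + 6 = 1 by norm_num)
  · exact (show -(1:ℝ) - 1 - 1 + 4*1 + 3*1 - 1 - 4*1 - 4*1 + 6 = 1 by norm_num)
  · exact (show -(1:ℝ) - 1 - 1 + 3*1 + 3*1 - 4*1 - 4*1 + 6 = 1 by norm_num)
  · exact (show (1:ℝ) + 1 - 1 = 1 by norm_num)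
  · exact (show 2*(1:ℝ) + 1 - 1 - 1 = 1 by norm_num)
  · exact (show (1:ℝ) + 2*1 - 1 - 1 = 1 by norm_num)
  · exact (show (1:ℝ) + 1 - 1 = 1 by norm_num)
  · exact (show (1:ℝ) + 1 + 1 - 1 - 1 = 1 by norm_num)
  · exact (show (1:ℝ) + 1 + 1 - 1 - 1 = 1 by norm_num)

lemma lfun_add (k : Fin 12) (y z : Fin 10 → ℝ) : lfun k (y + z) = lfun k y + lfun k z := by
  fin_cases k
  · exact (show y 0 + z 0 = y 0 + z 0 by ring)
  · exact (show y 1 + z 1 = y 1 + z 1 by ring)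
  · exact (show y 2 + z 2 = y 2 + z 2 by ring)
  · exact (show -(y 0 + z 0) - (y 1 + z 1) - (y 2 + z 2) - (y 3 + z 3) + 3*(y 4 + z 4) + 4*(y 5 + z 5) - 4*(y 7 + z 7) - 4*(y 8 + z 8) + (y 9 + z 9) = (-y 0 - y 1 - y 2 - y 3 + 3*y 4 + 4*y 5 - 4*y 7 - 4*y 8 + y 9) + (-z 0 - z 1 - z 2 - z 3 + 3*z 4 + 4*z 5 - 4*z 7 - 4*z 8 + z 9) by ring)
  · exact (show -(y 0 + z 0) - (y 1 + z 1) - (y 2 + z 2) + 4*(y 4 + z 4) + 3*(y 5 + z 5) - (y 6 + z 6) - 4*(y 7 + z 7) - 4*(y 8 + z 8) + (y 9 + z 9) = (-y 0 - y 1 - y 2 + 4*y 4 + 3*y 5 - y 6 - 4*y 7 - 4*y 8 + y 9) + (-z 0 - z 1 - z 2 + 4*z 4 + 3*z 5 - z 6 - 4*z 7 - 4*z 8 + z 9) by ring)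
  · exact (show -(y 0 + z 0) - (y 1 + z 1) - (y 2 + z 2) + 3*(y 4 + z 4) + 3*(y 5 + z 5) - 4*(y 7 + z 7) - 4*(y 8 + z 8) + (y 9 + z 9) = (-y 0 - y 1 - y 2 + 3*y 4 + 3*y 5 - 4*y 7 - 4*y 8 + y 9) + (-z 0 - z 1 - z 2 + 3*z 4 + 3*z 5 - 4*z 7 - 4*z 8 + z 9) by ring)
  · exact (show (y 4 + z 4) + (y 5 + z 5) - (y 7 + z 7) = (y 4 + y 5 - y 7) + (z 4 + z 5 - z 7) by ring)
  · exact (show 2*(y 4 + z 4) + (y 5 + z 5) - (y 7 + z 7) - (y 8 + z 8) = (2*y 4 + y 5 - y 7 - y 8) + (2*z 4 + z 5 - z 7 - z 8) by ring)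
  · exact (show (y 4 + z 4) + 2*(y 5 + z 5) - (y 7 + z 7) - (y 8 + z 8) = (y 4 + 2*y 5 - y 7 - y 8) + (z 4 + 2*z 5 - z 7 - z 8) by ring)
  · exact (show (y 4 + z 4) + (y 5 + z 5) - (y 8 + z 8) = (y 4 + y 5 - y 8) + (z 4 + z 5 - z 8) by ring)
  · exact (show (y 4 + z 4) + (y 5 + z 5) + (y 6 + z 6) - (y 7 + z 7) - (y 8 + z 8) = (y 4 + y 5 + y 6 - y 7 - y 8) + (z 4 + z 5 + z 6 - z 7 - z 8) by ring)
  · exact (show (y 3 + z 3) + (y 4 + z 4) + (y 5 + z 5) - (y 7 + z 7) - (y 8 + z 8) = (y 3 + y 4 + y 5 - y 7 - y 8) + (z 3 + z 4 + z 5 - z 7 - z 8) by ring)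

lemma lfun_linc (k : Fin 12) (y z : Fin 10 → ℝ) (r : ℝ) :
    lfun k (y - r • z) = lfun k y - r * lfun k z := by
  fin_cases k
  · exact (show y 0 - r * z 0 = y 0 - r * z 0 by ring)
  · exact (show y 1 - r * z 1 = y 1 - r * z 1 by ring)
  · exact (show y 2 - r * z 2 = y 2 - r * z 2 by ring)
  · exact (show -(y 0 - r*z 0) - (y 1 - r*z 1) - (y 2 - r*z 2) - (y 3 - r*z 3) + 3*(y 4 - r*z 4) + 4*(y 5 - r*z 5) - 4*(y 7 - r*z 7) - 4*(y 8 - r*z 8) + (y 9 - r*z 9) = (-y 0 - y 1 - y 2 - y 3 + 3*y 4 + 4*y 5 - 4*y 7 - 4*y 8 + y 9) - r * (-z 0 - z 1 - z 2 - z 3 + 3*z 4 + 4*z 5 - 4*z 7 - 4*z 8 + z 9) by ring)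
  · exact (show -(y 0 - r*z 0) - (y 1 - r*z 1) - (y 2 - r*z 2) + 4*(y 4 - r*z 4) + 3*(y 5 - r*z 5) - (y 6 - r*z 6) - 4*(y 7 - r*z 7) - 4*(y 8 - r*z 8) + (y 9 - r*z 9) = (-y 0 - y 1 - y 2 + 4*y 4 + 3*y 5 - y 6 - 4*y 7 - 4*y 8 + y 9) - r * (-z 0 - z 1 - z 2 + 4*z 4 + 3*z 5 - z 6 - 4*z 7 - 4*z 8 + z 9) by ring)
  · exact (show -(y 0 - r*z 0) - (y 1 - r*z 1) - (y 2 - r*z 2) + 3*(y 4 - r*z 4) + 3*(y 5 - r*z 5) - 4*(y 7 - r*z 7) - 4*(y 8 - r*z 8) + (y 9 - r*z 9) = (-y 0 - y 1 - y 2 + 3*y 4 + 3*y 5 - 4*y 7 - 4*y 8 + y 9) - r * (-z 0 - z 1 - z 2 + 3*z 4 + 3*z 5 - 4*z 7 - 4*z 8 + z 9) by ring)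
  · exact (show (y 4 - r*z 4) + (y 5 - r*z 5) - (y 7 - r*z 7) = (y 4 + y 5 - y 7) - r * (z 4 + z 5 - z 7) by ring)
  · exact (show 2*(y 4 - r*z 4) + (y 5 - r*z 5) - (y 7 - r*z 7) - (y 8 - r*z 8) = (2*y 4 + y 5 - y 7 - y 8) - r * (2*z 4 + z 5 - z 7 - z 8) by ring)
  · exact (show (y 4 - r*z 4) + 2*(y 5 - r*z 5) - (y 7 - r*z 7) - (y 8 - r*z 8) = (y 4 + 2*y 5 - y 7 - y 8) - r * (z 4 + 2*z 5 - z 7 - z 8) by ring)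
  · exact (show (y 4 - r*z 4) + (y 5 - r*z 5) - (y 8 - r*z 8) = (y 4 + y 5 - y 8) - r * (z 4 + z 5 - z 8) by ring)
  · exact (show (y 4 - r*z 4) + (y 5 - r*z 5) + (y 6 - r*z 6) - (y 7 - r*z 7) - (y 8 - r*z 8) = (y 4 + y 5 + y 6 - y 7 - y 8) - r * (z 4 + z 5 + z 6 - z 7 - z 8) by ring)
  · exact (show (y 3 - r*z 3) + (y 4 - r*z 4) + (y 5 - r*z 5) - (y 7 - r*z 7) - (y 8 - r*z 8) = (y 3 + y 4 + y 5 - y 7 - y 8) - r * (z 3 + z 4 + z 5 - z 7 - z 8) by ring)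


lemma lfun_sub (k : Fin 12) (y z : Fin 10 → ℝ) : lfun k (y - z) = lfun k y - lfun k z := by
  have h := lfun_linc k y z 1
  rw [one_smul] at h
  simpa using h

lemma lfun_int (k : Fin 12) (z : Fin 10 → ℤ) :
    ∃ n : ℤ, lfun k (fun t => (z t : ℝ)) = (n : ℝ) := by
  fin_cases k
  · exact ⟨z 0, show ((z 0 : ℤ) : ℝ) = ((z 0 : ℤ) : ℝ) by push_cast; ring⟩
  · exact ⟨z 1, show ((z 1 : ℤ) : ℝ) = ((z 1 : ℤ) : ℝ) by push_cast; ring⟩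
  · exact ⟨z 2, show ((z 2 : ℤ) : ℝ) = ((z 2 : ℤ) : ℝ) by push_cast; ring⟩
  · exact ⟨-z 0 - z 1 - z 2 - z 3 + 3*z 4 + 4*z 5 - 4*z 7 - 4*z 8 + z 9, show -((z 0 : ℤ) : ℝ) - ((z 1 : ℤ) : ℝ) - ((z 2 : ℤ) : ℝ) - ((z 3 : ℤ) : ℝ) + 3*((z 4 : ℤ) : ℝ) + 4*((z 5 : ℤ) : ℝ) - 4*((z 7 : ℤ) : ℝ) - 4*((z 8 : ℤ) : ℝ) + ((z 9 : ℤ) : ℝ) = ((-z 0 - z 1 - z 2 - z 3 + 3*z 4 + 4*z 5 - 4*z 7 - 4*z 8 + z 9 : ℤ) : ℝ) by push_cast; ring⟩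
  · exact ⟨-z 0 - z 1 - z 2 + 4*z 4 + 3*z 5 - z 6 - 4*z 7 - 4*z 8 + z 9, show -((z 0 : ℤ) : ℝ) - ((z 1 : ℤ) : ℝ) - ((z 2 : ℤ) : ℝ) + 4*((z 4 : ℤ) : ℝ) + 3*((z 5 : ℤ) : ℝ) - ((z 6 : ℤ) : ℝ) - 4*((z 7 : ℤ) : ℝ) - 4*((z 8 : ℤ) : ℝ) + ((z 9 : ℤ) : ℝ) = ((-z 0 - z 1 - z 2 + 4*z 4 + 3*z 5 - z 6 - 4*z 7 - 4*z 8 + z 9 : ℤ) : ℝ) by push_cast; ring⟩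
  · exact ⟨-z 0 - z 1 - z 2 + 3*z 4 + 3*z 5 - 4*z 7 - 4*z 8 + z 9, show -((z 0 : ℤ) : ℝ) - ((z 1 : ℤ) : ℝ) - ((z 2 : ℤ) : ℝ) + 3*((z 4 : ℤ) : ℝ) + 3*((z 5 : ℤ) : ℝ) - 4*((z 7 : ℤ) : ℝ) - 4*((z 8 : ℤ) : ℝ) + ((z 9 : ℤ) : ℝ) = ((-z 0 - z 1 - z 2 + 3*z 4 + 3*z 5 - 4*z 7 - 4*z 8 + z 9 : ℤ) : ℝ) by push_cast; ring⟩
  · exact ⟨z 4 + z 5 - z 7, show ((z 4 : ℤ) : ℝ) + ((z 5 : ℤ) : ℝ) - ((z 7 : ℤ) : ℝ) = ((z 4 + z 5 - z 7 : ℤ) : ℝ) by push_cast; ring⟩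
  · exact ⟨2*z 4 + z 5 - z 7 - z 8, show 2*((z 4 : ℤ) : ℝ) + ((z 5 : ℤ) : ℝ) - ((z 7 : ℤ) : ℝ) - ((z 8 : ℤ) : ℝ) = ((2*z 4 + z 5 - z 7 - z 8 : ℤ) : ℝ) by push_cast; ring⟩
  · exact ⟨z 4 + 2*z 5 - z 7 - z 8, show ((z 4 : ℤ) : ℝ) + 2*((z 5 : ℤ) : ℝ) - ((z 7 : ℤ) : ℝ) - ((z 8 : ℤ) : ℝ) = ((z 4 + 2*z 5 - z 7 - z 8 : ℤ) : ℝ) by push_cast; ring⟩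
  · exact ⟨z 4 + z 5 - z 8, show ((z 4 : ℤ) : ℝ) + ((z 5 : ℤ) : ℝ) - ((z 8 : ℤ) : ℝ) = ((z 4 + z 5 - z 8 : ℤ) : ℝ) by push_cast; ring⟩
  · exact ⟨z 4 + z 5 + z 6 - z 7 - z 8, show ((z 4 : ℤ) : ℝ) + ((z 5 : ℤ) : ℝ) + ((z 6 : ℤ) : ℝ) - ((z 7 : ℤ) : ℝ) - ((z 8 : ℤ) : ℝ) = ((z 4 + z 5 + z 6 - z 7 - z 8 : ℤ) : ℝ) by push_cast; ring⟩
  · exact ⟨z 3 + z 4 + z 5 - z 7 - z 8, show ((z 3 : ℤ) : ℝ) + ((z 4 : ℤ) : ℝ) + ((z 5 : ℤ) : ℝ) - ((z 7 : ℤ) : ℝ) - ((z 8 : ℤ) : ℝ) = ((z 3 + z 4 + z 5 - z 7 - z 8 : ℤ) : ℝ) by push_cast; ring⟩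

def iA : Fin 3 → Fin 10 := ![0,1,2]
def iB : Fin 3 → Fin 10 := ![3,5,7]
def iC : Fin 3 → Fin 10 := ![4,6,8]
def iD : Fin 3 → Fin 10 := ![1,2,0]

lemma glue_iff (f g : Fin 10 → ℝ) (i j : Fin 3) :
    bd10R f i = swR (bd10R g j) ↔
      (f (iA i) + f (iB i) = g (iC j) + g (iD j) ∧ f (iC i) + f (iD i) = g (iA j) + g (iB j)) := by
  fin_cases i <;> fin_cases j <;>
    simp [bd10R, swR, iA, iB, iC, iD, Prod.ext_iff]

lemma wAB : ∀ i, wR (iA i) + wR (iB i) = 2 := by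
  intro i; fin_cases i
  · exact (show (1:ℝ) + 1 = 2 by norm_num)
  · exact (show (1:ℝ) + 1 = 2 by norm_num)
  · exact (show (1:ℝ) + 1 = 2 by norm_num)

lemma wCD : ∀ i, wR (iC i) + wR (iD i) = 2 := by
  intro i; fin_cases i
  · exact (show (1:ℝ) + 1 = 2 by norm_num)
  · exact (show (1:ℝ) + 1 = 2 by norm_num)
  · exact (show (1:ℝ) + 1 = 2 by norm_num)

lemma affine_ker {E F : Type*} [AddCommGroup E] [Module ℝ E] [AddCommGroup F] [Module ℝ F]
    (e : E →ₗ[ℝ] F) (s : Set E) (h : ∀ z ∈ s, e z = 0) {z : E}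
    (hz : z ∈ affineSpan ℝ s) : e z = 0 := by
  have h1 : affineSpan ℝ s ≤ (Submodule.span ℝ s).toAffineSubspace :=
    affineSpan_le_toAffineSubspace_span
  have h2 : Submodule.span ℝ s ≤ LinearMap.ker e :=
    Submodule.span_le.mpr fun w hw => LinearMap.mem_ker.mpr (h w hw)
  exact LinearMap.mem_ker.mp (h2 (Submodule.mem_toAffineSubspace.mp (h1 hz)))

def cproj {V : Type} (v : V) (t : Fin 10) : (V → Fin 10 → ℝ) →ₗ[ℝ] ℝ where
  toFun f := f v t
  map_add' f g := rfl
  map_smul' r f := rfl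

lemma cproj_apply {V : Type} (v : V) (t : Fin 10) (f : V → Fin 10 → ℝ) :
    cproj v t f = f v t := rfl


lemma mem_glued_iff {V : Type} {P : Set (Sym2 (V × Fin 3))} (f : V → Fin 10 → ℝ) :
    f ∈ gluedCone V P ↔
      (∀ v, f v 3 + f v 4 = f v 6 + f v 7 ∧ f v 3 + f v 8 = f v 5 + f v 6 ∧
        ∀ k, 0 ≤ lfun k (f v)) ∧
      (∀ v w, f v 9 = f w 9) ∧
      (∀ (v w : V) (i j : Fin 3), s((v,i),(w,j)) ∈ P →
        (f v (iA i) + f v (iB i) = f w (iC j) + f w (iD j) ∧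
         f v (iC i) + f v (iD i) = f w (iA j) + f w (iB j))) := by
  unfold gluedCone
  simp only [Set.mem_setOf_eq, mem_coneC_iff, glue_iff]

lemma w_mem {V : Type} {P : Set (Sym2 (V × Fin 3))} :
    (fun _ : V => wR) ∈ gluedCone V P := by
  refine (mem_glued_iff _).mpr ⟨fun v => ⟨?_, ?_, fun k => by rw [lfun_w]; norm_num⟩, fun v w => rfl, ?_⟩
  · exact (show (1:ℝ) + 1 = 1 + 1 by norm_num)
  · exact (show (1:ℝ) + 1 = 1 + 1 by norm_num)
  · intro v w i j _
    constructor
    · rw [wAB, wCD]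
    · rw [wAB, wCD]

lemma zero_mem {V : Type} {P : Set (Sym2 (V × Fin 3))} :
    (0 : V → Fin 10 → ℝ) ∈ gluedCone V P := by
  refine (mem_glued_iff _).mpr ⟨fun v => ⟨?_, ?_, fun k => ?_⟩, fun v w => rfl, ?_⟩
  · exact (show (0:ℝ) + 0 = 0 + 0 by norm_num)
  · exact (show (0:ℝ) + 0 = 0 + 0 by norm_num)
  · have : lfun k ((0:V → Fin 10 → ℝ) v) = lfun k ((0:V → Fin 10 → ℝ) v + (0:V → Fin 10 → ℝ) v) := by
      norm_num
    rw [lfun_add] at this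
    linarith
  · intro v w i j _
    constructor
    · show (0:ℝ) + 0 = 0 + 0; norm_num
    · show (0:ℝ) + 0 = 0 + 0; norm_num

end CBaux


open CBaux

/-- Combinatorial Gorenstein property of the glued conformal-block cone of any
trivalent graph (`V` a nonempty finite set, `P` a set of unordered pairs of distinct
half-edges, each half-edge in at most one pair): the lattice points of the relative
(intrinsic) interior of `C_P` are exactly `ω_P + (C_P ∩ ℤ)`, with canonical generator
`ω_P` in level `6`. -/
theorem stmt_18 (V : Type) [Fintype V] [Nonempty V]
    (P : Set (Sym2 (V × Fin 3)))
    (hndiag : ∀ p ∈ P, ¬ p.IsDiag)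
    (hdisj : ∀ p ∈ P, ∀ q ∈ P, ∀ h : V × Fin 3, h ∈ p → h ∈ q → p = q)
    (x : V → Fin 10 → ℤ) :
    ((fun v t => (x v t : ℝ)) ∈ intrinsicInterior ℝ (gluedCone V P)) ↔
      ∃ u : V → Fin 10 → ℤ,
        ((fun v t => (u v t : ℝ)) ∈ gluedCone V P) ∧ x = omegaP V + u := by
  classical
  set D : Set (V → Fin 10 → ℝ) := gluedCone V P with hDdef
  have hcast : ∀ (v : V) (t : Fin 10), ((omegaP V v t : ℤ) : ℝ) = wR t := by
    intro v t; fin_cases t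
    · exact (show ((1:ℤ):ℝ) = 1 by norm_num)
    · exact (show ((1:ℤ):ℝ) = 1 by norm_num)
    · exact (show ((1:ℤ):ℝ) = 1 by norm_num)
    · exact (show ((1:ℤ):ℝ) = 1 by norm_num)
    · exact (show ((1:ℤ):ℝ) = 1 by norm_num)
    · exact (show ((1:ℤ):ℝ) = 1 by norm_num)
    · exact (show ((1:ℤ):ℝ) = 1 by norm_num)
    · exact (show ((1:ℤ):ℝ) = 1 by norm_num)
    · exact (show ((1:ℤ):ℝ) = 1 by norm_num)
    · exact (show ((6:ℤ):ℝ) = 6 by norm_num)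
  have hωD : (fun _ : V => wR) ∈ D := w_mem
  have h0D : (0 : V → Fin 10 → ℝ) ∈ D := zero_mem
  have e0 : wR 0 = 1 := rfl
  have e1 : wR 1 = 1 := rfl
  have e2 : wR 2 = 1 := rfl
  have e3 : wR 3 = 1 := rfl
  have e4 : wR 4 = 1 := rfl
  have e5 : wR 5 = 1 := rfl
  have e6 : wR 6 = 1 := rfl
  have e7 : wR 7 = 1 := rfl
  have e8 : wR 8 = 1 := rfl
  have e9 : wR 9 = 6 := rfl
  constructor
  · intro hx
    set xR : V → Fin 10 → ℝ := fun v t => (x v t : ℝ) with hxRdef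
    have hxD : xR ∈ D := intrinsicInterior_subset hx
    obtain ⟨hxC, hxL, hxG⟩ := (mem_glued_iff xR).mp hxD
    obtain ⟨p, hp, hpx⟩ := mem_intrinsicInterior.mp hx
    have hωSp : (fun _ : V => wR) ∈ affineSpan ℝ D := subset_affineSpan ℝ D hωD
    have h0Sp : (0 : V → Fin 10 → ℝ) ∈ affineSpan ℝ D := subset_affineSpan ℝ D h0D
    have hmem : ∀ r : ℝ, (p : V → Fin 10 → ℝ) - r • (fun _ : V => wR) ∈ affineSpan ℝ D := by
      intro r
      have h := AffineSubspace.smul_vsub_vadd_mem (affineSpan ℝ D) r h0Sp hωSp p.2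
      have he : r • ((0 : V → Fin 10 → ℝ) -ᵥ (fun _ : V => wR)) +ᵥ (p : V → Fin 10 → ℝ)
          = (p : V → Fin 10 → ℝ) - r • (fun _ : V => wR) := by
        rw [vsub_eq_sub, vadd_eq_add, zero_sub, smul_neg]; abel
      rwa [he] at h
    have hγc : Continuous (fun r : ℝ =>
        (⟨(p : V → Fin 10 → ℝ) - r • (fun _ : V => wR), hmem r⟩ :
          (affineSpan ℝ D : Set (V → Fin 10 → ℝ)))) :=
      Continuous.subtype_mk (continuous_const.sub (continuous_id.smul continuous_const)) _
    have hnh : (fun r : ℝ =>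
        (⟨(p : V → Fin 10 → ℝ) - r • (fun _ : V => wR), hmem r⟩ :
          (affineSpan ℝ D : Set (V → Fin 10 → ℝ)))) ⁻¹' interior (Subtype.val ⁻¹' D)
          ∈ nhds (0:ℝ) := by
      apply (isOpen_interior.preimage hγc).mem_nhds
      rw [Set.mem_preimage]
      have h00 : (⟨(p : V → Fin 10 → ℝ) - (0:ℝ) • (fun _ : V => wR), hmem 0⟩ :
          (affineSpan ℝ D : Set (V → Fin 10 → ℝ))) = p := Subtype.ext (by simp)
      rw [h00]; exact hp
    obtain ⟨ε, hε, hball⟩ := Metric.mem_nhds_iff.mp hnh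
    have hrr : (ε/2) ∈ Metric.ball (0:ℝ) ε := by
      rw [Metric.mem_ball, Real.dist_eq, sub_zero, abs_of_pos (by linarith)]; linarith
    have hmemi : (⟨(p : V → Fin 10 → ℝ) - (ε/2) • (fun _ : V => wR), hmem (ε/2)⟩ :
        (affineSpan ℝ D : Set (V → Fin 10 → ℝ))) ∈ interior (Subtype.val ⁻¹' D) := hball hrr
    have hrD0 : (⟨(p : V → Fin 10 → ℝ) - (ε/2) • (fun _ : V => wR), hmem (ε/2)⟩ :
        (affineSpan ℝ D : Set (V → Fin 10 → ℝ))) ∈ Subtype.val ⁻¹' D :=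
      interior_subset hmemi
    have hrD : (p : V → Fin 10 → ℝ) - (ε/2) • (fun _ : V => wR) ∈ D := hrD0
    rw [hpx] at hrD
    have hstrict : ∀ (v : V) (k : Fin 12), (1:ℝ) ≤ lfun k (xR v) := by
      intro v k
      have hkk : (0:ℝ) ≤ lfun k (xR v - (ε/2) • wR) :=
        (((mem_glued_iff _).mp hrD).1 v).2.2 k
      rw [lfun_linc, lfun_w] at hkk
      obtain ⟨n, hn⟩ := lfun_int k (x v)
      have hxv : lfun k (xR v) = (n:ℝ) := hn
      rw [hxv] at hkk ⊢
      have hn0 : (0:ℤ) < n := by exact_mod_cast (show (0:ℝ) < (n:ℝ) by nlinarith)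
      exact_mod_cast hn0
    refine ⟨fun v t => x v t - omegaP V v t, ?_, ?_⟩
    · have hu : (fun v t => ((x v t - omegaP V v t : ℤ) : ℝ)) = fun v => xR v - wR := by
        funext v t
        push_cast
        rw [hcast]
        rfl
      rw [hu]
      refine (mem_glued_iff _).mpr ⟨fun v => ⟨?_, ?_, fun k => ?_⟩, ?_, ?_⟩
      · obtain ⟨h1, _, _⟩ := hxC v
        show xR v 3 - wR 3 + (xR v 4 - wR 4) = xR v 6 - wR 6 + (xR v 7 - wR 7)
        rw [e3, e4, e6, e7]; linarith
      · obtain ⟨_, h2, _⟩ := hxC v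
        show xR v 3 - wR 3 + (xR v 8 - wR 8) = xR v 5 - wR 5 + (xR v 6 - wR 6)
        rw [e3, e8, e5, e6]; linarith
      · rw [lfun_sub, lfun_w]
        linarith [hstrict v k]
      · intro v w
        show xR v 9 - wR 9 = xR w 9 - wR 9
        rw [hxL v w]
      · intro v w i j hP
        obtain ⟨g1, g2⟩ := hxG v w i j hP
        have hA := wAB i
        have hB := wCD i
        have hA' := wAB j
        have hB' := wCD j
        constructor
        · show xR v (iA i) - wR (iA i) + (xR v (iB i) - wR (iB i)) =
            xR w (iC j) - wR (iC j) + (xR w (iD j) - wR (iD j))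
          linarith
        · show xR v (iC i) - wR (iC i) + (xR v (iD i) - wR (iD i)) =
            xR w (iA j) - wR (iA j) + (xR w (iB j) - wR (iB j))
          linarith
    · funext v t
      show x v t = omegaP V v t + (x v t - omegaP V v t)
      ring
  · rintro ⟨u, huD, rfl⟩
    set uR : V → Fin 10 → ℝ := fun v t => (u v t : ℝ) with huRdef
    set xR : V → Fin 10 → ℝ := fun v t => (((omegaP V + u) v t : ℤ) : ℝ) with hxRdef
    obtain ⟨huC, huL, huG⟩ := (mem_glued_iff uR).mp huD
    have hxw : ∀ v, xR v = wR + uR v := by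
      intro v; funext t
      show ((omegaP V v t + u v t : ℤ) : ℝ) = wR t + uR v t
      push_cast
      rw [hcast]
    have hxD : xR ∈ D := by
      refine (mem_glued_iff _).mpr ⟨fun v => ⟨?_, ?_, fun k => ?_⟩, ?_, ?_⟩
      · obtain ⟨h1, _, _⟩ := huC v
        rw [hxw v]
        show wR 3 + uR v 3 + (wR 4 + uR v 4) = wR 6 + uR v 6 + (wR 7 + uR v 7)
        rw [e3, e4, e6, e7]; linarith
      · obtain ⟨_, h2, _⟩ := huC v
        rw [hxw v]
        show wR 3 + uR v 3 + (wR 8 + uR v 8) = wR 5 + uR v 5 + (wR 6 + uR v 6)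
        rw [e3, e8, e5, e6]; linarith
      · rw [hxw v, lfun_add, lfun_w]
        have := (huC v).2.2 k; linarith
      · intro v w
        rw [hxw v, hxw w]
        show wR 9 + uR v 9 = wR 9 + uR w 9
        rw [huL v w]
      · intro v w i j hP
        obtain ⟨g1, g2⟩ := huG v w i j hP
        have hA := wAB i
        have hB := wCD i
        have hA' := wAB j
        have hB' := wCD j
        rw [hxw v, hxw w]
        constructor
        · show wR (iA i) + uR v (iA i) + (wR (iB i) + uR v (iB i)) =
            wR (iC j) + uR w (iC j) + (wR (iD j) + uR w (iD j))
          linarith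
        · show wR (iC i) + uR v (iC i) + (wR (iD i) + uR v (iD i)) =
            wR (iA j) + uR w (iA j) + (wR (iB j) + uR w (iB j))
          linarith
    refine mem_intrinsicInterior.mpr ⟨⟨xR, subset_affineSpan ℝ D hxD⟩, ?_, rfl⟩
    have hct : ∀ (v : V) (t : Fin 10), Continuous fun g :
        (affineSpan ℝ D : Set (V → Fin 10 → ℝ)) => (g : V → Fin 10 → ℝ) v t :=
      fun v t => (continuous_apply t).comp ((continuous_apply v).comp continuous_subtype_val)
    have hUopen : IsOpen {g : (affineSpan ℝ D : Set (V → Fin 10 → ℝ)) |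
        ∀ (v : V) (k : Fin 12), 0 < lfun k ((g : V → Fin 10 → ℝ) v)} := by
      have hrw : {g : (affineSpan ℝ D : Set (V → Fin 10 → ℝ)) |
          ∀ (v : V) (k : Fin 12), 0 < lfun k ((g : V → Fin 10 → ℝ) v)} =
          ⋂ (v : V), ⋂ (k : Fin 12),
            {g : (affineSpan ℝ D : Set (V → Fin 10 → ℝ)) |
              0 < lfun k ((g : V → Fin 10 → ℝ) v)} := by
        ext g; simp only [Set.mem_iInter, Set.mem_setOf_eq]
      rw [hrw]
      refine isOpen_iInter_of_finite fun v => isOpen_iInter_of_finite fun k => ?_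
      have hpre : {g : (affineSpan ℝ D : Set (V → Fin 10 → ℝ)) |
          0 < lfun k ((g : V → Fin 10 → ℝ) v)} =
          (fun g : (affineSpan ℝ D : Set (V → Fin 10 → ℝ)) =>
            lfun k ((g : V → Fin 10 → ℝ) v)) ⁻¹' Set.Ioi 0 := rfl
      rw [hpre]
      refine IsOpen.preimage ?_ isOpen_Ioi
      fin_cases k
      · exact hct v 0
      · exact hct v 1
      · exact hct v 2
      · exact ((((((((((hct v 0).neg.sub (hct v 1)).sub (hct v 2)).sub (hct v 3)).add
          (continuous_const.mul (hct v 4))).add (continuous_const.mul (hct v 5))).sub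
          (continuous_const.mul (hct v 7))).sub (continuous_const.mul (hct v 8))).add (hct v 9)))
      · exact ((((((((((hct v 0).neg.sub (hct v 1)).sub (hct v 2)).add
          (continuous_const.mul (hct v 4))).add (continuous_const.mul (hct v 5))).sub
          (hct v 6)).sub
          (continuous_const.mul (hct v 7))).sub (continuous_const.mul (hct v 8))).add (hct v 9)))
      · exact (((((((((hct v 0).neg.sub (hct v 1)).sub (hct v 2)).add
          (continuous_const.mul (hct v 4))).add (continuous_const.mul (hct v 5))).sub
          (continuous_const.mul (hct v 7))).sub (continuous_const.mul (hct v 8))).add (hct v 9)))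
      · exact ((hct v 4).add (hct v 5)).sub (hct v 7)
      · exact (((continuous_const.mul (hct v 4)).add (hct v 5)).sub (hct v 7)).sub (hct v 8)
      · exact (((hct v 4).add (continuous_const.mul (hct v 5))).sub (hct v 7)).sub (hct v 8)
      · exact ((hct v 4).add (hct v 5)).sub (hct v 8)
      · exact ((((hct v 4).add (hct v 5)).add (hct v 6)).sub (hct v 7)).sub (hct v 8)
      · exact ((((hct v 3).add (hct v 4)).add (hct v 5)).sub (hct v 7)).sub (hct v 8)
    have hUsub : {g : (affineSpan ℝ D : Set (V → Fin 10 → ℝ)) |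
        ∀ (v : V) (k : Fin 12), 0 < lfun k ((g : V → Fin 10 → ℝ) v)} ⊆
        Subtype.val ⁻¹' D := by
      intro g hg
      have hE1 : ∀ v : V, (g : V → Fin 10 → ℝ) v 3 + (g : V → Fin 10 → ℝ) v 4 =
          (g : V → Fin 10 → ℝ) v 6 + (g : V → Fin 10 → ℝ) v 7 := by
        intro v
        have he : ∀ z ∈ D, (cproj v 3 + cproj v 4 - cproj v 6 - cproj v 7) z = 0 := by
          intro z hz
          obtain ⟨h1, _, _⟩ := ((mem_glued_iff z).mp hz).1 v
          simp only [LinearMap.sub_apply, LinearMap.add_apply, cproj_apply]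
          linarith
        have h := affine_ker _ D he g.2
        simp only [LinearMap.sub_apply, LinearMap.add_apply, cproj_apply] at h
        linarith
      have hE2 : ∀ v : V, (g : V → Fin 10 → ℝ) v 3 + (g : V → Fin 10 → ℝ) v 8 =
          (g : V → Fin 10 → ℝ) v 5 + (g : V → Fin 10 → ℝ) v 6 := by
        intro v
        have he : ∀ z ∈ D, (cproj v 3 + cproj v 8 - cproj v 5 - cproj v 6) z = 0 := by
          intro z hz
          obtain ⟨_, h2, _⟩ := ((mem_glued_iff z).mp hz).1 v
          simp only [LinearMap.sub_apply, LinearMap.add_apply, cproj_apply]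
          linarith
        have h := affine_ker _ D he g.2
        simp only [LinearMap.sub_apply, LinearMap.add_apply, cproj_apply] at h
        linarith
      have hLev : ∀ v w : V, (g : V → Fin 10 → ℝ) v 9 = (g : V → Fin 10 → ℝ) w 9 := by
        intro v w
        have he : ∀ z ∈ D, (cproj v 9 - cproj w 9) z = 0 := by
          intro z hz
          have h1 := ((mem_glued_iff z).mp hz).2.1 v w
          simp only [LinearMap.sub_apply, cproj_apply]
          linarith
        have h := affine_ker _ D he g.2
        simp only [LinearMap.sub_apply, cproj_apply] at h
        linarith
      have hGl : ∀ (v w : V) (i j : Fin 3), s((v,i),(w,j)) ∈ P →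
          ((g : V → Fin 10 → ℝ) v (iA i) + (g : V → Fin 10 → ℝ) v (iB i) =
            (g : V → Fin 10 → ℝ) w (iC j) + (g : V → Fin 10 → ℝ) w (iD j) ∧
           (g : V → Fin 10 → ℝ) v (iC i) + (g : V → Fin 10 → ℝ) v (iD i) =
            (g : V → Fin 10 → ℝ) w (iA j) + (g : V → Fin 10 → ℝ) w (iB j)) := by
        intro v w i j hP
        constructor
        · have he : ∀ z ∈ D,
              (cproj v (iA i) + cproj v (iB i) - cproj w (iC j) - cproj w (iD j)) z = 0 := by
            intro z hz
            obtain ⟨g1, _⟩ := ((mem_glued_iff z).mp hz).2.2 v w i j hP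
            simp only [LinearMap.sub_apply, LinearMap.add_apply, cproj_apply]
            linarith
          have h := affine_ker _ D he g.2
          simp only [LinearMap.sub_apply, LinearMap.add_apply, cproj_apply] at h
          linarith
        · have he : ∀ z ∈ D,
              (cproj v (iC i) + cproj v (iD i) - cproj w (iA j) - cproj w (iB j)) z = 0 := by
            intro z hz
            obtain ⟨_, g2⟩ := ((mem_glued_iff z).mp hz).2.2 v w i j hP
            simp only [LinearMap.sub_apply, LinearMap.add_apply, cproj_apply]
            linarith
          have h := affine_ker _ D he g.2
          simp only [LinearMap.sub_apply, LinearMap.add_apply, cproj_apply] at h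
          linarith
      exact Set.mem_preimage.mpr ((mem_glued_iff _).mpr
        ⟨fun v => ⟨hE1 v, hE2 v, fun k => le_of_lt (hg v k)⟩, hLev, hGl⟩)
    refine interior_maximal hUsub hUopen ?_
    intro v k
    show 0 < lfun k (xR v)
    rw [hxw v, lfun_add, lfun_w]
    have := (huC v).2.2 k
    linarith
end
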